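/- Let N ≥ 2 and n ≥ 1 be integers and let W = (w_ij) be an N×N real matrix with nonnegative entries that is doubly stochastic (W1 = 1 and 1ᵀW = 1ᵀ), such that for all i ≠ j one has w_ij > 0 if and only if w_ji > 0, such that w_ii > 0 for at least one index i, and such that the graph on {1,…,N} having an edge between i ≠ j whenever w_ij > 0 is connected. Then the spectral norm β := ‖W − (1/N)11ᵀ‖₂ (largest singular value) satisfies β < 1, and for every x ∈ ℝ^{N×n} one has ‖Wx − X̄‖ ≤ β‖x − X̄‖, where ‖·‖ is the Frobenius norm and X̄ ∈ ℝ^{N×n} is the matrix all of whose rows equal the row-average x̄ := (1/N)Σ_{i=1}^N x_i of the rows x_i of x. -/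

import Mathlib

open scoped BigOperators RealInnerProductSpace
open MeasureTheory

/-- Frobenius norm of a real `N × n` matrix. -/
noncomputable def fnorm {N n : ℕ} (x : Matrix (Fin N) (Fin n) ℝ) : ℝ :=
  Real.sqrt (∑ i, ∑ j, (x i j) ^ 2)

/-- The row-average `x̄ = (1/N) ∑ᵢ xᵢ` of the rows of a matrix. -/
noncomputable def rowAvg {N n : ℕ} (x : Matrix (Fin N) (Fin n) ℝ) : Fin n → ℝ :=
  fun j => (∑ i, x i j) / N

/-- The matrix `X̄` all of whose rows equal the row-average of `x`. -/
noncomputable def avgMat {N n : ℕ} (x : Matrix (Fin N) (Fin n) ℝ) :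
    Matrix (Fin N) (Fin n) ℝ :=
  Matrix.of fun _ j => rowAvg x j

/-- The matrix all of whose rows equal the vector `v`. -/
def constMat (N : ℕ) {n : ℕ} (v : EuclideanSpace ℝ (Fin n)) : Matrix (Fin N) (Fin n) ℝ :=
  Matrix.of fun _ j => v j

/-- The spectral norm (largest singular value) of a square real matrix, i.e. its
operator norm as a linear map between Euclidean spaces. -/
noncomputable def specNorm {N : ℕ} (M : Matrix (Fin N) (Fin N) ℝ) : ℝ :=
  ‖LinearMap.toContinuousLinearMap (Matrix.toEuclideanLin M)‖

/-- The matrix `(1/N) 1 1ᵀ`. -/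
noncomputable def Jmat (N : ℕ) : Matrix (Fin N) (Fin N) ℝ :=
  Matrix.of fun _ _ => (N : ℝ)⁻¹

/-- `∇F(x)`: the matrix whose `i`-th row is `∇ fᵢ(xᵢ)`, `xᵢ` being the `i`-th row of `x`. -/
noncomputable def gradF {N n : ℕ} (f : Fin N → EuclideanSpace ℝ (Fin n) → ℝ)
    (x : Matrix (Fin N) (Fin n) ℝ) : Matrix (Fin N) (Fin n) ℝ :=
  Matrix.of fun i j => gradient (f i) (WithLp.toLp 2 (fun j' => x i j')) j

/- ### Auxiliary lemmas -/

/-- Variance identity for a probability row. -/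
lemma row_variance {N : ℕ} (w u : Fin N → ℝ) (hw : ∑ j, w j = 1) :
    ∑ j, ∑ k, w j * w k * (u j - u k)^2
      = 2 * ((∑ j, w j * u j ^ 2) - (∑ j, w j * u j)^2) := by
  have e1 : ∑ j, ∑ k, w j * w k * (u j - u k)^2
      = ∑ j, ∑ k, ((w j * u j ^ 2) * w k + w j * (w k * u k ^ 2)
          - 2 * ((w j * u j) * (w k * u k))) := by
    refine Finset.sum_congr rfl fun j _ => Finset.sum_congr rfl fun k _ => by ring
  rw [e1]
  have e2 : ∀ j : Fin N, ∑ k, ((w j * u j ^ 2) * w k + w j * (w k * u k ^ 2)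
          - 2 * ((w j * u j) * (w k * u k)))
      = (w j * u j ^ 2) * (∑ k, w k) + w j * (∑ k, w k * u k ^ 2)
          - 2 * ((w j * u j) * (∑ k, w k * u k)) := by
    intro j
    simp [Finset.sum_add_distrib, Finset.sum_sub_distrib, ← Finset.mul_sum, ← Finset.sum_mul]
  rw [Finset.sum_congr rfl fun j _ => e2 j]
  simp only [Finset.sum_add_distrib, Finset.sum_sub_distrib, ← Finset.sum_mul, ← Finset.mul_sum, hw]
  ring

/-- Key contraction identity: `‖Wu‖² = ‖u‖² - Δ/2`. -/
lemma contraction_identity {N : ℕ} (W : Matrix (Fin N) (Fin N) ℝ)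
    (hrow : ∀ i, ∑ j, W i j = 1) (hcol : ∀ j, ∑ i, W i j = 1) (u : Fin N → ℝ) :
    ∑ i, (W.mulVec u i)^2
      = (∑ j, (u j)^2)
        - (1/2) * ∑ i, ∑ j, ∑ k, W i j * W i k * (u j - u k)^2 := by
  have e1 : ∀ i, (W.mulVec u i)^2
      = (∑ j, W i j * u j ^ 2)
        - (1/2) * ∑ j, ∑ k, W i j * W i k * (u j - u k)^2 := by
    intro i
    have := row_variance (W i) u (hrow i)
    have hm : W.mulVec u i = ∑ j, W i j * u j := by
      simp [Matrix.mulVec, dotProduct]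
    rw [hm]; linarith
  rw [Finset.sum_congr rfl fun i _ => e1 i, Finset.sum_sub_distrib]
  rw [Finset.sum_comm (f := fun i j => W i j * u j ^ 2)]
  have : ∀ j : Fin N, ∑ i, W i j * u j ^ 2 = u j ^ 2 := by
    intro j; rw [← Finset.sum_mul, hcol, one_mul]
  rw [Finset.sum_congr rfl fun j _ => this j, ← Finset.mul_sum]

/-- Connectivity forces equality-everywhere in the equality case. -/
lemma forced_constant {N : ℕ} (hN : 2 ≤ N) (W : Matrix (Fin N) (Fin N) ℝ)
    (hsupp : ∀ i j, i ≠ j → (0 < W i j ↔ 0 < W j i))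
    (hdiag : ∃ i, 0 < W i i)
    (hconn : (SimpleGraph.fromRel fun i j => 0 < W i j).Connected)
    (u : Fin N → ℝ)
    (H : ∀ i j k, 0 < W i j → 0 < W i k → u j = u k)
    (hsum : ∑ i, u i = 0) : u = 0 := by
  obtain ⟨i0, hi0⟩ := hdiag
  set G := SimpleGraph.fromRel fun i j : Fin N => 0 < W i j with hG
  -- invariant along walks
  have step : ∀ {a b : Fin N}, G.Adj a b →
      ((u a = u i0 ∧ ∀ y, 0 < W a y → u y = u i0) →
        (u b = u i0 ∧ ∀ y, 0 < W b y → u y = u i0)) := by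
    intro a b hab ⟨ha1, ha2⟩
    rw [hG, SimpleGraph.fromRel_adj] at hab
    obtain ⟨hne, hor⟩ := hab
    have hab' : 0 < W a b := by
      rcases hor with h | h
      · exact h
      · exact (hsupp a b hne).2 h
    have hba : 0 < W b a := (hsupp a b hne).1 hab'
    have hub : u b = u i0 := ha2 b hab'
    refine ⟨hub, fun y hy => ?_⟩
    have := H b y a hy hba
    rw [this, ha1]
  have base : u i0 = u i0 ∧ ∀ y, 0 < W i0 y → u y = u i0 :=
    ⟨rfl, fun y hy => H i0 y i0 hy hi0⟩
  have all_eq : ∀ t, u t = u i0 := by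
    intro t
    obtain ⟨p⟩ := (hconn.preconnected i0 t)
    have : ∀ {a b : Fin N} (q : G.Walk a b),
        (u a = u i0 ∧ ∀ y, 0 < W a y → u y = u i0) →
        (u b = u i0 ∧ ∀ y, 0 < W b y → u y = u i0) := by
      intro a b q
      induction q with
      | nil => exact id
      | cons h q ih => exact fun hs => ih (step h hs)
    exact (this p base).1
  have : ∑ i, u i = (N : ℝ) * u i0 := by
    rw [Finset.sum_congr rfl fun i _ => all_eq i]
    simp [Finset.card_univ, mul_comm]
  rw [hsum] at this
  have hNz : (N : ℝ) ≠ 0 := by positivity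
  have hui0 : u i0 = 0 := by
    rcases mul_eq_zero.1 this.symm with h | h
    · exact absurd h hNz
    · exact h
  funext t; rw [Pi.zero_apply, all_eq t, hui0]

/-- Strict contraction on the hyperplane `∑ u = 0`. -/
lemma strict_contraction {N : ℕ} (hN : 2 ≤ N) (W : Matrix (Fin N) (Fin N) ℝ)
    (hnonneg : ∀ i j, 0 ≤ W i j)
    (hrow : ∀ i, ∑ j, W i j = 1) (hcol : ∀ j, ∑ i, W i j = 1)
    (hsupp : ∀ i j, i ≠ j → (0 < W i j ↔ 0 < W j i))
    (hdiag : ∃ i, 0 < W i i)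
    (hconn : (SimpleGraph.fromRel fun i j => 0 < W i j).Connected)
    (u : Fin N → ℝ) (hsum : ∑ i, u i = 0) (hu : u ≠ 0) :
    ∑ i, (W.mulVec u i)^2 < ∑ j, (u j)^2 := by
  rw [contraction_identity W hrow hcol u]
  have hterm : ∀ i j k : Fin N, 0 ≤ W i j * W i k * (u j - u k)^2 := fun i j k => by
    have := hnonneg i j; have := hnonneg i k; positivity
  -- some term is positive
  have hne : ¬ (∀ i j k, 0 < W i j → 0 < W i k → u j = u k) := by
    intro H
    exact hu (forced_constant hN W hsupp hdiag hconn u H hsum)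
  push_neg at hne
  obtain ⟨i, j, k, hij, hik, hjk⟩ := hne
  have hpos : 0 < ∑ i, ∑ j, ∑ k, W i j * W i k * (u j - u k)^2 := by
    have h1 : 0 < W i j * W i k * (u j - u k)^2 := by
      have : (u j - u k)^2 > 0 := by
        have : u j - u k ≠ 0 := sub_ne_zero.2 hjk
        positivity
      positivity
    have hinner : 0 < ∑ k', W i j * W i k' * (u j - u k')^2 :=
      Finset.sum_pos' (fun k' _ => hterm i j k') ⟨k, Finset.mem_univ k, h1⟩
    have hmid : 0 < ∑ j', ∑ k', W i j' * W i k' * (u j' - u k')^2 :=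
      Finset.sum_pos' (fun j' _ => Finset.sum_nonneg fun k' _ => hterm i j' k')
        ⟨j, Finset.mem_univ j, hinner⟩
    exact Finset.sum_pos' (fun i' _ => Finset.sum_nonneg fun j' _ =>
        Finset.sum_nonneg fun k' _ => hterm i' j' k')
      ⟨i, Finset.mem_univ i, hmid⟩
  linarith

/-- Norm-squared of Euclidean vectors as sums of squares. -/
lemma eucl_norm_sq {N : ℕ} (v : EuclideanSpace ℝ (Fin N)) :
    ‖v‖ ^ 2 = ∑ i, (v i)^2 := by
  rw [EuclideanSpace.norm_eq, Real.sq_sqrt (by positivity)]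
  simp [sq_abs]

/-- `(W - J) v = W u` where `u` is the centered version of `v`. -/
lemma sub_J_mulVec {N : ℕ} (hN : 2 ≤ N) (W : Matrix (Fin N) (Fin N) ℝ)
    (hrow : ∀ i, ∑ j, W i j = 1) (v : Fin N → ℝ) :
    (W - Jmat N).mulVec v = W.mulVec (fun i => v i - (∑ i, v i) / N) := by
  have hNz : (N : ℝ) ≠ 0 := by positivity
  funext i
  simp only [Matrix.mulVec, dotProduct, Matrix.sub_apply, Jmat, Matrix.of_apply]
  have e1 : ∑ j, (W i j - (N:ℝ)⁻¹) * v j = ∑ j, W i j * v j - (∑ j, v j) / N := by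
    rw [Finset.sum_congr rfl (fun j _ => by ring : ∀ j ∈ Finset.univ,
      (W i j - (N:ℝ)⁻¹) * v j = W i j * v j - (N:ℝ)⁻¹ * v j)]
    rw [Finset.sum_sub_distrib, ← Finset.mul_sum]
    ring
  have e2 : ∑ j, W i j * (v j - (∑ k, v k) / N)
      = ∑ j, W i j * v j - (∑ k, v k) / N := by
    rw [Finset.sum_congr rfl (fun j _ => by ring : ∀ j ∈ Finset.univ,
      W i j * (v j - (∑ k, v k) / N) = W i j * v j - W i j * ((∑ k, v k) / N))]
    rw [Finset.sum_sub_distrib, ← Finset.sum_mul, hrow i, one_mul]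
  rw [e1, e2]

lemma specNorm_lt_one  {N : ℕ} (hN : 2 ≤ N) (W : Matrix (Fin N) (Fin N) ℝ)
    (hnonneg : ∀ i j, 0 ≤ W i j)
    (hrow : ∀ i, ∑ j, W i j = 1) (hcol : ∀ j, ∑ i, W i j = 1)
    (hsupp : ∀ i j, i ≠ j → (0 < W i j ↔ 0 < W j i))
    (hdiag : ∃ i, 0 < W i i)
    (hconn : (SimpleGraph.fromRel fun i j => 0 < W i j).Connected) :
    specNorm (W - Jmat N) < 1 := by
  have hNz : (N : ℝ) ≠ 0 := by positivity
  set A := LinearMap.toContinuousLinearMap (Matrix.toEuclideanLin (W - Jmat N)) with hA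
  -- key: for unit v, ‖A v‖ < 1
  have key : ∀ v : EuclideanSpace ℝ (Fin N), ‖v‖ = 1 → ‖A v‖ < 1 := by
    intro v hv
    have hAv : ∀ i, A v i = (W - Jmat N).mulVec v i := fun i => rfl
    set c : ℝ := (∑ i, v i) / N with hc
    set u : Fin N → ℝ := fun i => v i - c with hu
    have husum : ∑ i, u i = 0 := by
      simp only [hu, Finset.sum_sub_distrib, Finset.sum_const, Finset.card_univ,
        Fintype.card_fin, nsmul_eq_mul, hc]
      field_simp
      ring
    have hAvW : ∀ i, A v i = W.mulVec u i := by
      intro i; rw [hAv i, sub_J_mulVec hN W hrow v]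
    have hAnorm : ‖A v‖^2 = ∑ i, (W.mulVec u i)^2 := by
      rw [eucl_norm_sq]
      exact Finset.sum_congr rfl fun i _ => by rw [hAvW i]
    have hvsq : ∑ i, (v i)^2 = 1 := by
      have := eucl_norm_sq v; rw [hv] at this; simpa using this.symm
    have husq : ∑ i, (u i)^2 ≤ 1 := by
      have expand : ∑ i, (u i)^2 = ∑ i, (v i)^2 - (N:ℝ) * c^2 := by
        have : ∀ i, (u i)^2 = (v i)^2 - 2 * c * v i + c^2 := fun i => by
          simp only [hu]; ring
        rw [Finset.sum_congr rfl fun i _ => this i]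
        rw [Finset.sum_add_distrib, Finset.sum_sub_distrib, ← Finset.mul_sum]
        have hsv : ∑ i, v i = (N:ℝ) * c := by rw [hc]; field_simp
        simp only [Finset.sum_const, Finset.card_univ, Fintype.card_fin, nsmul_eq_mul, hsv]
        ring
      have : 0 ≤ (N:ℝ) * c^2 := by positivity
      rw [expand, hvsq]; linarith
    by_cases hu0 : u = 0
    · have : ‖A v‖^2 = 0 := by
        rw [hAnorm, hu0]
        simp [Matrix.mulVec, dotProduct]
      have h0 : ‖A v‖ = 0 := by nlinarith [norm_nonneg (A v)]
      rw [h0]; norm_num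
    · have := strict_contraction hN W hnonneg hrow hcol hsupp hdiag hconn u husum hu0
      have hlt : ‖A v‖^2 < 1 := by rw [hAnorm]; linarith
      nlinarith [norm_nonneg (A v)]
  -- compactness: the norm is attained
  have : Nontrivial (EuclideanSpace ℝ (Fin N)) := by
    refine ⟨⟨0, EuclideanSpace.single ⟨0, by omega⟩ (1:ℝ), ?_⟩⟩
    intro h
    have := congrFun (congrArg (WithLp.equiv 2 _) h) ⟨0, by omega⟩
    simp at this
  have hne : (Metric.sphere (0 : EuclideanSpace ℝ (Fin N)) 1).Nonempty :=
    NormedSpace.sphere_nonempty.2 zero_le_one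
  obtain ⟨u0, hu0s, hmax⟩ := (isCompact_sphere (0 : EuclideanSpace ℝ (Fin N)) 1).exists_isMaxOn
    hne ((continuous_norm.comp A.continuous).continuousOn)
  have hu0 : ‖u0‖ = 1 := by simpa using hu0s
  have hbound : ∀ v : EuclideanSpace ℝ (Fin N), ‖A v‖ ≤ ‖A u0‖ * ‖v‖ := by
    intro v
    by_cases hv : v = 0
    · simp [hv]
    · have hvn : ‖v‖ ≠ 0 := norm_ne_zero_iff.2 hv
      have hsphere : (‖v‖⁻¹ • v) ∈ Metric.sphere (0 : EuclideanSpace ℝ (Fin N)) 1 := by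
        simp [norm_smul, abs_of_nonneg (norm_nonneg v), inv_mul_cancel₀ hvn]
      have h6 : ‖A (‖v‖⁻¹ • v)‖ ≤ ‖A u0‖ := hmax hsphere
      rw [A.map_smul, norm_smul, norm_inv, norm_norm] at h6
      calc ‖A v‖ = ‖v‖ * (‖v‖⁻¹ * ‖A v‖) := by field_simp
        _ ≤ ‖v‖ * ‖A u0‖ := by
            apply mul_le_mul_of_nonneg_left _ (norm_nonneg v)
            exact h6
        _ = ‖A u0‖ * ‖v‖ := mul_comm _ _
  have hAle : ‖A‖ ≤ ‖A u0‖ := A.opNorm_le_bound (norm_nonneg _) hbound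
  have : ‖A u0‖ < 1 := key u0 hu0
  calc specNorm (W - Jmat N) = ‖A‖ := rfl
    _ ≤ ‖A u0‖ := hAle
    _ < 1 := this

theorem stmt0 (N n : ℕ) (hN : 2 ≤ N) (hn : 1 ≤ n)
    (W : Matrix (Fin N) (Fin N) ℝ)
    (hnonneg : ∀ i j, 0 ≤ W i j)
    (hrow : ∀ i, ∑ j, W i j = 1) (hcol : ∀ j, ∑ i, W i j = 1)
    (hsupp : ∀ i j, i ≠ j → (0 < W i j ↔ 0 < W j i))
    (hdiag : ∃ i, 0 < W i i)
    (hconn : (SimpleGraph.fromRel fun i j => 0 < W i j).Connected) :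
    specNorm (W - Jmat N) < 1 ∧
      ∀ x : Matrix (Fin N) (Fin n) ℝ,
        fnorm (W * x - avgMat x) ≤ specNorm (W - Jmat N) * fnorm (x - avgMat x) := by
  have hNz : (N : ℝ) ≠ 0 := by positivity
  set A := LinearMap.toContinuousLinearMap (Matrix.toEuclideanLin (W - Jmat N)) with hA
  have hspec : specNorm (W - Jmat N) = ‖A‖ := rfl
  refine ⟨specNorm_lt_one hN W hnonneg hrow hcol hsupp hdiag hconn, fun x => ?_⟩
  -- matrix identity
  have hid : W * x - avgMat x = (W - Jmat N) * (x - avgMat x) := by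
    ext i j
    simp only [Matrix.sub_apply, Matrix.mul_apply, avgMat, Matrix.of_apply, rowAvg,
      Jmat]
    have e1 : ∑ k, (W i k - (N:ℝ)⁻¹) * (x k j - (∑ i', x i' j) / N)
        = ∑ k, (W i k * x k j - W i k * ((∑ i', x i' j) / N)
            - (N:ℝ)⁻¹ * x k j + (N:ℝ)⁻¹ * ((∑ i', x i' j) / N)) := by
      exact Finset.sum_congr rfl fun k _ => by ring
    rw [e1]
    simp only [Finset.sum_add_distrib, Finset.sum_sub_distrib, ← Finset.mul_sum,
      ← Finset.sum_mul, hrow i, Finset.sum_const, Finset.card_univ, Fintype.card_fin,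
      nsmul_eq_mul]
    field_simp
    ring
  rw [hid]
  -- column-wise bound
  set M := W - Jmat N with hM
  set y := x - avgMat x with hy
  have colbound : ∀ j : Fin n,
      ∑ i, ((M * y) i j)^2 ≤ ‖A‖^2 * ∑ i, (y i j)^2 := by
    intro j
    set col : EuclideanSpace ℝ (Fin N) := (WithLp.equiv 2 _).symm (fun i => y i j) with hcolv
    have h1 : ∀ i, (M * y) i j = A col i := by
      intro i
      show (M * y) i j = M.mulVec (fun i' => y i' j) i
      simp [Matrix.mul_apply, Matrix.mulVec, dotProduct]
    have h2 : ∑ i, ((M * y) i j)^2 = ‖A col‖^2 := by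
      rw [eucl_norm_sq]
      exact Finset.sum_congr rfl fun i _ => by rw [h1 i]
    have h3 : ‖col‖^2 = ∑ i, (y i j)^2 := by rw [eucl_norm_sq]; rfl
    have h4 : ‖A col‖ ≤ ‖A‖ * ‖col‖ := A.le_opNorm col
    have h5 : ‖A col‖^2 ≤ (‖A‖ * ‖col‖)^2 := by
      have := norm_nonneg (A col)
      nlinarith [norm_nonneg (A col), norm_nonneg col, norm_nonneg A]
    rw [h2, ← h3]
    calc ‖A col‖^2 ≤ (‖A‖ * ‖col‖)^2 := h5
      _ = ‖A‖^2 * ‖col‖^2 := by ring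
  -- combine
  unfold fnorm
  rw [hspec]
  have swap1 : ∑ i, ∑ j, ((M * y) i j)^2 = ∑ j, ∑ i, ((M * y) i j)^2 := Finset.sum_comm
  have swap2 : ∑ i, ∑ j, (y i j)^2 = ∑ j, ∑ i, (y i j)^2 := Finset.sum_comm
  rw [swap1, swap2]
  have hsumle : ∑ j, ∑ i, ((M * y) i j)^2 ≤ ‖A‖^2 * ∑ j, ∑ i, (y i j)^2 := by
    rw [Finset.mul_sum]
    exact Finset.sum_le_sum fun j _ => colbound j
  calc Real.sqrt (∑ j, ∑ i, ((M * y) i j)^2)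
      ≤ Real.sqrt (‖A‖^2 * ∑ j, ∑ i, (y i j)^2) := Real.sqrt_le_sqrt hsumle
    _ = ‖A‖ * Real.sqrt (∑ j, ∑ i, (y i j)^2) := by
        rw [Real.sqrt_mul (by positivity), Real.sqrt_sq (norm_nonneg _)]
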